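/- arXiv:2008.00144 — 4 statements merged into one kernel-verified Lean document; each statement's English description precedes it below -/
import Mathlib

section
/- Suppose 0 < a < x, Δτ > 0, and the expectation E[T_a] equals a·∫₀^∞ exp(−(2xy + y²)/(2Δτ)) dy. Then 1/(1 + x⁻²·Δτ) ≤ E[T_a]/((a/x)·Δτ) ≤ 1. -/
open Set Real MeasureTheory Filter Topology

lemma int_exp_neg_mul_Ioi_zero {b : ℝ} (hb : 0 < b) :
    ∫ y in Set.Ioi (0:ℝ), Real.exp (-b * y) = 1 / b := by
  have h := integral_Ioi_of_hasDerivAt_of_tendsto'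
    (f := fun y : ℝ => -Real.exp (-b * y) / b) (f' := fun y : ℝ => Real.exp (-b * y))
    (a := (0:ℝ)) (m := 0) ?_ (exp_neg_integrableOn_Ioi 0 hb) ?_
  · rw [h]; norm_num; ring
  · intro y _
    have h1 : HasDerivAt (fun y : ℝ => -b * y) (-b) y := by
      simpa using (hasDerivAt_id y).const_mul (-b)
    have h2 := (h1.exp.neg).div_const b
    convert h2 using 1
    · rfl
    · rfl
    · field_simp
  · have h3 : Tendsto (fun y : ℝ => -b * y) atTop atBot := by
      have := tendsto_id.const_mul_atTop hb (f := fun y : ℝ => y)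
      simpa [neg_mul] using tendsto_neg_atBot_iff.mpr this
    have h4 := ((Real.tendsto_exp_atBot.comp h3).neg).div_const b
    convert h4 using 2
    norm_num
    norm_num

/-- Key inequality for the expected Brownian-bridge hitting time: if `0 < a < x`, `Δτ > 0`,
and `E[T_a] = a·∫₀^∞ exp(−(2xy + y²)/(2Δτ)) dy`, then
`1/(1 + x⁻²Δτ) ≤ E[T_a]/((a/x)Δτ) ≤ 1`. -/
theorem exit_time_inequality (a x Δτ ETa : ℝ) (ha : 0 < a) (hax : a < x) (hΔτ : 0 < Δτ)
    (hETa : ETa = a * ∫ y in Set.Ioi (0 : ℝ), Real.exp (-(2 * x * y + y ^ 2) / (2 * Δτ))) :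
    1 / (1 + (x ^ 2)⁻¹ * Δτ) ≤ ETa / ((a / x) * Δτ) ∧ ETa / ((a / x) * Δτ) ≤ 1 := by
  have hx : 0 < x := ha.trans hax
  set f : ℝ → ℝ := fun y => Real.exp (-(2 * x * y + y ^ 2) / (2 * Δτ)) with hf
  set J : ℝ := ∫ y in Set.Ioi (0 : ℝ), f y with hJ
  have hb : 0 < x / Δτ := by positivity
  -- pointwise upper bound by exp(-(x/Δτ) y)
  have hfle : ∀ y ∈ Ioi (0:ℝ), f y ≤ Real.exp (-(x/Δτ) * y) := by
    intro y hy
    apply Real.exp_le_exp.mpr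
    rw [div_le_iff₀ (by positivity : (0:ℝ) < 2 * Δτ)]
    have hc : x / Δτ * Δτ = x := div_mul_cancel₀ x hΔτ.ne'
    nlinarith [sq_nonneg y, hy.out]
  have hfcont : Continuous f := by fun_prop
  have hgint : IntegrableOn (fun y : ℝ => Real.exp (-(x/Δτ) * y)) (Ioi 0) :=
    exp_neg_integrableOn_Ioi 0 hb
  have hfint : IntegrableOn f (Ioi 0) := by
    refine hgint.mono' (hfcont.aestronglyMeasurable.restrict) ?_
    filter_upwards [ae_restrict_mem measurableSet_Ioi] with y hy
    rw [Real.norm_eq_abs, abs_of_pos (Real.exp_pos _)]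
    exact hfle y hy
  -- upper bound on J
  have hJup : J ≤ Δτ / x := by
    have := setIntegral_mono_on hfint hgint measurableSet_Ioi hfle
    rwa [int_exp_neg_mul_Ioi_zero hb, one_div_div] at this
  -- the antiderivative h
  set c : ℝ := 1 + Δτ / x ^ 2 with hc
  have hcpos : 0 < c := by positivity
  set g' : ℝ → ℝ := fun y => -((1 + Δτ / (y + x) ^ 2) * f y) with hg'
  have hderiv : ∀ y ∈ Ici (0:ℝ), HasDerivAt (fun y => Δτ * ((y + x)⁻¹ * f y)) (g' y) y := by
    intro y hy
    have hyx : 0 < y + x := by have := hy.out; linarith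
    have he : HasDerivAt (fun y : ℝ => -(2 * x * y + y ^ 2) / (2 * Δτ))
        (-(2 * x * 1 + (2:ℕ) * y ^ (2 - 1)) / (2 * Δτ)) y :=
      ((((hasDerivAt_id y).const_mul (2*x)).add (hasDerivAt_pow 2 y)).neg).div_const (2*Δτ)
    have hexp := he.exp
    have hinv : HasDerivAt (fun y : ℝ => (y + x)⁻¹) (-1 / (y + x) ^ 2) y := by
      convert ((hasDerivAt_id y).add_const x).inv hyx.ne' using 1
      · rfl
      · rfl
      · rfl
      · rfl
    have hmul := (hinv.mul hexp).const_mul Δτ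
    convert hmul using 1
    · rfl
    · rfl
    · rfl
    simp only [hg', hf]
    norm_num
    field_simp
    ring
  have hg'int : IntegrableOn g' (Ioi 0) := by
    have hcont : ContinuousOn g' (Ioi 0) := by
      apply ContinuousOn.neg
      apply ContinuousOn.mul _ hfcont.continuousOn
      apply ContinuousOn.add continuousOn_const
      apply ContinuousOn.div continuousOn_const (by fun_prop)
      intro y hy
      have : 0 < y + x := by have := hy.out; linarith
      positivity
    refine ((hfint.const_mul c).mono' (hcont.aestronglyMeasurable measurableSet_Ioi) ?_)
    filter_upwards [ae_restrict_mem measurableSet_Ioi] with y hy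
    have hyx : 0 < y + x := by have := hy.out; linarith
    have h1 : Δτ / (y + x) ^ 2 ≤ Δτ / x ^ 2 := by
      apply div_le_div_of_nonneg_left hΔτ.le (by positivity)
      nlinarith [hy.out]
    have h2 : (0:ℝ) < 1 + Δτ / (y + x) ^ 2 := by positivity
    rw [Real.norm_eq_abs, hg', abs_neg, abs_of_pos (by positivity)]
    have := Real.exp_pos (-(2 * x * y + y ^ 2) / (2 * Δτ))
    apply mul_le_mul_of_nonneg_right _ (le_of_lt this)
    linarith
  have htend : Tendsto (fun y => Δτ * ((y + x)⁻¹ * f y)) atTop (𝓝 0) := by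
    have hmaj : Tendsto (fun y : ℝ => Δτ * (y + x)⁻¹) atTop (𝓝 0) := by
      have : Tendsto (fun y : ℝ => (y + x)⁻¹) atTop (𝓝 0) :=
        Tendsto.inv_tendsto_atTop (tendsto_atTop_add_const_right atTop x tendsto_id)
      simpa using this.const_mul Δτ
    apply tendsto_of_tendsto_of_tendsto_of_le_of_le' tendsto_const_nhds hmaj
    · filter_upwards [eventually_ge_atTop (0:ℝ)] with y hy
      have hyx : 0 < y + x := by linarith
      positivity
    · filter_upwards [eventually_ge_atTop (0:ℝ)] with y hy
      have hyx : 0 < y + x := by linarith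
      have hfle1 : f y ≤ 1 := by
        rw [hf]
        apply Real.exp_le_one_iff.mpr  -- maybe wrong name
        apply div_nonpos_of_nonpos_of_nonneg _ (by positivity)
        nlinarith
      calc Δτ * ((y + x)⁻¹ * f y) ≤ Δτ * ((y + x)⁻¹ * 1) := by
            apply mul_le_mul_of_nonneg_left _ hΔτ.le
            exact mul_le_mul_of_nonneg_left hfle1 (by positivity)
        _ = Δτ * (y + x)⁻¹ := by ring
  have hFTC := integral_Ioi_of_hasDerivAt_of_tendsto' hderiv hg'int htend
  have hJlow : Δτ / x ≤ c * J := by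
    have hint2 : ∫ y in Ioi (0:ℝ), -(g' y) = Δτ / x := by
      rw [integral_neg, hFTC]
      simp [hf]
      ring
    have hmono : ∫ y in Ioi (0:ℝ), -(g' y) ≤ ∫ y in Ioi (0:ℝ), c * f y := by
      apply setIntegral_mono_on hg'int.neg (hfint.const_mul c) measurableSet_Ioi
      intro y hy
      have hyx : 0 < y + x := by have := hy.out; linarith
      have h1 : Δτ / (y + x) ^ 2 ≤ Δτ / x ^ 2 := by
        apply div_le_div_of_nonneg_left hΔτ.le (by positivity)
        nlinarith [hy.out]
      have := Real.exp_pos (-(2 * x * y + y ^ 2) / (2 * Δτ))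
      simp only [Pi.neg_apply, hg', neg_neg]
      apply mul_le_mul_of_nonneg_right _ (le_of_lt this)
      linarith
    rw [hint2, MeasureTheory.integral_const_mul] at hmono
    exact hmono
  -- conclude
  clear_value J c
  constructor
  · have hceq : 1 + (x ^ 2)⁻¹ * Δτ = c := by rw [hc]; ring
    rw [hceq, hETa, div_le_div_iff₀ hcpos (by positivity)]
    calc 1 * (a / x * Δτ) = a * (Δτ / x) := by ring
      _ ≤ a * (c * J) := mul_le_mul_of_nonneg_left hJlow ha.le
      _ = a * J * c := by ring
  · rw [hETa, div_le_one (by positivity)]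
    calc a * J ≤ a * (Δτ / x) := mul_le_mul_of_nonneg_left hJup ha.le
      _ = a / x * Δτ := by ring
end

section
/- If E ∼ Exp(1) and Δτ > 0 and x ∈ ℝ, then the random variable M = (1/2)(x + √(x² + 2Δτ·E)) satisfies, for every m ≥ max(x, 0), P(M > m) = exp(−2m(m − x)/Δτ). -/
open MeasureTheory

/-- If `E ∼ Exp(1)`, `Δτ > 0` and `x ∈ ℝ`, then `M = (1/2)(x + √(x² + 2Δτ·E))` satisfies
`P(M > m) = exp(−2m(m−x)/Δτ)` for every `m ≥ max(x, 0)`. -/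
theorem max_sampling_tail {Ω : Type*} [MeasurableSpace Ω] (μ : Measure Ω)
    [IsProbabilityMeasure μ] (E : Ω → ℝ) (hE0 : ∀ ω, 0 ≤ E ω)
    (hE : ∀ t : ℝ, 0 ≤ t → μ {ω | t < E ω} = ENNReal.ofReal (Real.exp (-t)))
    (x Δτ : ℝ) (hΔτ : 0 < Δτ) :
    ∀ m : ℝ, max x 0 ≤ m →
      μ {ω | m < (1 / 2) * (x + Real.sqrt (x ^ 2 + 2 * Δτ * E ω))} =
        ENNReal.ofReal (Real.exp (-2 * m * (m - x) / Δτ)) := by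
  intro m hm
  have hmx : x ≤ m := le_trans (le_max_left _ _) hm
  have hm0 : 0 ≤ m := le_trans (le_max_right _ _) hm
  set t : ℝ := 2 * m * (m - x) / Δτ with ht
  have ht0 : 0 ≤ t := by
    apply div_nonneg _ hΔτ.le
    have : 0 ≤ m - x := by linarith
    positivity
  have hset : {ω | m < (1 / 2) * (x + Real.sqrt (x ^ 2 + 2 * Δτ * E ω))} =
      {ω | t < E ω} := by
    ext ω
    simp only [Set.mem_setOf_eq]
    have harg : 0 ≤ x ^ 2 + 2 * Δτ * E ω := by
      have := hE0 ω; positivity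
    constructor
    · intro h
      have h2 : 2 * m - x < Real.sqrt (x ^ 2 + 2 * Δτ * E ω) := by linarith
      have hsq : (2 * m - x) ^ 2 < x ^ 2 + 2 * Δτ * E ω := by
        calc (2 * m - x) ^ 2 < Real.sqrt (x ^ 2 + 2 * Δτ * E ω) ^ 2 := by
              apply sq_lt_sq' _ h2
              have hs := Real.sqrt_nonneg (x ^ 2 + 2 * Δτ * E ω)
              linarith
          _ = x ^ 2 + 2 * Δτ * E ω := Real.sq_sqrt harg
      rw [ht, div_lt_iff₀ hΔτ]
      nlinarith
    · intro h
      rw [ht, div_lt_iff₀ hΔτ] at h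
      have h2 : (2 * m - x) ^ 2 < x ^ 2 + 2 * Δτ * E ω := by nlinarith
      have h3 : 2 * m - x < Real.sqrt (x ^ 2 + 2 * Δτ * E ω) := by
        have h4 : 0 ≤ 2 * m - x := by linarith
        nlinarith [Real.sq_sqrt harg, Real.sqrt_nonneg (x ^ 2 + 2 * Δτ * E ω)]
      linarith
  rw [hset, hE t ht0]
  congr 1
  rw [ht]
  ring_nf
end

section
/- Reflection principle: for standard one-dimensional Brownian motion B with B(0) = 0 and any a > 0 and t > 0, P(max_{0 ≤ s ≤ t} B(s) ≥ a) = 2·P(B(t) ≥ a). -/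
open MeasureTheory

/-- A standard one-dimensional Brownian motion started at `0`: measurable marginals,
continuous paths, Gaussian increments, and independent increments. -/
structure IsBrownianMotion {Ω : Type*} [MeasurableSpace Ω] (μ : Measure Ω)
    (B : ℝ → Ω → ℝ) : Prop where
  measurable : ∀ t : ℝ, Measurable (B t)
  cont : ∀ ω, Continuous fun t => B t ω
  init : ∀ ω, B 0 ω = 0
  increment : ∀ s t : ℝ, 0 ≤ s → s ≤ t →
    Measure.map (fun ω => B t ω - B s ω) μ =
      ProbabilityTheory.gaussianReal 0 (Real.toNNReal (t - s))
  indep : ∀ (n : ℕ) (t : ℕ → ℝ), Monotone t → (∀ i, 0 ≤ t i) →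
    ProbabilityTheory.iIndepFun
      (fun i : Fin n => fun ω => B (t (i + 1)) ω - B (t i) ω) μ


open MeasureTheory ProbabilityTheory Real Filter
open scoped NNReal ENNReal Topology

namespace RefAux

noncomputable def psum {n : ℕ} (x : Fin n → ℝ) (k : ℕ) : ℝ :=
  ∑ i ∈ Finset.univ.filter (fun i : Fin n => (i : ℕ) < k), x i

lemma psum_zero {n : ℕ} (x : Fin n → ℝ) : psum x 0 = 0 := by simp [psum]

lemma psum_succ {n : ℕ} (x : Fin n → ℝ) {k : ℕ} (hk : k < n) :
    psum x (k + 1) = psum x k + x ⟨k, hk⟩ := by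
  unfold psum
  have h : Finset.univ.filter (fun i : Fin n => (i : ℕ) < k + 1)
      = insert (⟨k, hk⟩ : Fin n) (Finset.univ.filter (fun i : Fin n => (i : ℕ) < k)) := by
    ext i
    simp only [Finset.mem_filter, Finset.mem_univ, true_and, Finset.mem_insert,
      Nat.lt_succ_iff_lt_or_eq, Fin.ext_iff]
    tauto
  rw [h, Finset.sum_insert (by simp)]
  ring

lemma measurable_psum {n : ℕ} (k : ℕ) : Measurable (fun x : Fin n → ℝ => psum x k) :=
  Finset.measurable_sum _ fun i _ => measurable_pi_apply i

lemma psum_top {n : ℕ} (x : Fin n → ℝ) : psum x n = ∑ i, x i := by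
  unfold psum; congr 1; ext i; simp [i.isLt]

def reflMap (n k : ℕ) (x : Fin n → ℝ) : Fin n → ℝ :=
  fun i => if k ≤ (i : ℕ) then -x i else x i

lemma measurable_reflMap (n k : ℕ) : Measurable (reflMap n k) := by
  refine measurable_pi_lambda _ fun i => ?_
  by_cases h : k ≤ (i : ℕ) <;> simp only [reflMap, h, if_true, if_false]
  · exact (measurable_pi_apply i).neg
  · exact measurable_pi_apply i

lemma psum_reflMap_of_le {n k j : ℕ} (x : Fin n → ℝ) (hjk : j ≤ k) :
    psum (reflMap n k x) j = psum x j := by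
  unfold psum
  refine Finset.sum_congr rfl fun i hi => ?_
  simp only [Finset.mem_filter] at hi
  have : ¬ k ≤ (i : ℕ) := by omega
  simp [reflMap, this]

lemma psum_reflMap_top {n k : ℕ} (x : Fin n → ℝ) :
    psum (reflMap n k x) n = 2 * psum x k - psum x n := by
  rw [psum_top]
  have h1 : ∀ i : Fin n, reflMap n k x i = 2 * (if (i : ℕ) < k then x i else 0) - x i := by
    intro i
    by_cases h : k ≤ (i : ℕ)
    · have : ¬ (i : ℕ) < k := by omega
      simp [reflMap, h, this]
    · have : (i : ℕ) < k := by omega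
      simp [reflMap, h, this]
      ring
  rw [Finset.sum_congr rfl fun i _ => h1 i, Finset.sum_sub_distrib, ← Finset.mul_sum]
  rw [← Finset.sum_filter, ← psum_top]
  rfl

lemma pi_map_comp {n : ℕ} (ν : Fin n → Measure ℝ) [∀ i, IsProbabilityMeasure (ν i)]
    (f : Fin n → ℝ → ℝ) (hf : ∀ i, Measurable (f i))
    (hinv : ∀ i, Measure.map (f i) (ν i) = ν i) :
    Measure.map (fun x i => f i (x i)) (Measure.pi ν) = Measure.pi ν := by
  refine (Measure.pi_eq fun s hs => ?_).symm
  have hmeas : Measurable fun (x : Fin n → ℝ) i => f i (x i) :=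
    measurable_pi_lambda _ fun i => (hf i).comp (measurable_pi_apply i)
  rw [Measure.map_apply hmeas (MeasurableSet.univ_pi hs)]
  have hset : (fun (x : Fin n → ℝ) i => f i (x i)) ⁻¹' Set.pi Set.univ s
      = Set.pi Set.univ (fun i => f i ⁻¹' s i) := by
    ext x; simp [Set.mem_pi]
  rw [hset, Measure.pi_pi]
  exact Finset.prod_congr rfl fun i _ => by
    rw [← Measure.map_apply (hf i) (hs i), hinv i]

/-- The product measure is invariant under `reflMap n k` when each factor is
symmetric under negation. -/
lemma map_reflMap_pi {n : ℕ} (k : ℕ) (ρ : Measure ℝ) [IsProbabilityMeasure ρ]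
    (hsym : Measure.map (fun x => -x) ρ = ρ) :
    Measure.map (reflMap n k) (Measure.pi fun _ : Fin n => ρ)
      = Measure.pi (fun _ : Fin n => ρ) := by
  have h := pi_map_comp (fun _ : Fin n => ρ)
    (fun i => if k ≤ (i : ℕ) then (fun y : ℝ => -y) else id)
    (fun i => by split_ifs; exacts [measurable_neg, measurable_id])
    (fun i => by split_ifs; exacts [hsym, Measure.map_id])
  have heq : (fun (x : Fin n → ℝ) (i : Fin n) =>
      (if k ≤ (i : ℕ) then (fun y : ℝ => -y) else id) (x i)) = reflMap n k := by
    ext x i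
    by_cases hik : k ≤ (i : ℕ) <;> simp [reflMap, hik]
  rwa [heq] at h

/-- The main discrete reflection estimates. -/
lemma discrete_reflection {n : ℕ} (hn : 0 < n) (ρ : Measure ℝ) [IsProbabilityMeasure ρ]
    (hsym : Measure.map (fun x => -x) ρ = ρ) {b δ : ℝ} (hb : 0 < b) (hδ : 0 < δ) :
    (Measure.pi fun _ : Fin n => ρ) {x | ∃ k, k ≤ n ∧ b < psum x k}
        ≤ 2 * (Measure.pi fun _ : Fin n => ρ) {x | b ≤ psum x n}
    ∧ 2 * (Measure.pi fun _ : Fin n => ρ) {x | b + 2*δ ≤ psum x n}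
        ≤ (Measure.pi fun _ : Fin n => ρ) {x | ∃ k, k ≤ n ∧ b < psum x k}
          + n * ρ {y | δ ≤ y} := by
  classical
  set P : Measure (Fin n → ℝ) := Measure.pi (fun _ : Fin n => ρ) with hP
  set T : ℕ → Set (Fin n → ℝ) :=
    fun k => {x | (∀ j, j < k → psum x j ≤ b) ∧ b < psum x k} with hT
  set Mev : Set (Fin n → ℝ) := {x | ∃ k, k ≤ n ∧ b < psum x k} with hMevdef
  set C1 : Set (Fin n → ℝ) := {x | psum x n < b} with hC1
  set C2 : Set (Fin n → ℝ) := {x | b ≤ psum x n} with hC2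
  set C3 : Set (Fin n → ℝ) := {x | b + 2*δ ≤ psum x n} with hC3
  set D : Set (Fin n → ℝ) := {x | ∃ i : Fin n, δ ≤ x i} with hD
  -- measurability
  have hTmeas : ∀ k, MeasurableSet (T k) := by
    intro k
    have h1 : MeasurableSet {x : Fin n → ℝ | ∀ j, j < k → psum x j ≤ b} := by
      have : {x : Fin n → ℝ | ∀ j, j < k → psum x j ≤ b}
          = ⋂ j, ⋂ _ : j < k, {x | psum x j ≤ b} := by
        ext x; simp
      rw [this]
      exact MeasurableSet.iInter fun j => MeasurableSet.iInter fun _ =>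
        measurableSet_le (measurable_psum j) measurable_const
    exact h1.inter (measurableSet_lt measurable_const (measurable_psum k))
  have hC1meas : MeasurableSet C1 := measurableSet_lt (measurable_psum n) measurable_const
  have hC2meas : MeasurableSet C2 := measurableSet_le measurable_const (measurable_psum n)
  have hC3meas : MeasurableSet C3 := measurableSet_le measurable_const (measurable_psum n)
  -- partition of Mev
  have hMev : Mev = ⋃ k ∈ Finset.range (n+1), T k := by
    ext x
    simp only [hMevdef, Set.mem_setOf_eq, Set.mem_iUnion, Finset.mem_range]
    constructor
    · rintro ⟨k, hk, hbk⟩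
      have hex : ∃ m, b < psum x m := ⟨k, hbk⟩
      refine ⟨Nat.find hex, ?_, ?_, Nat.find_spec hex⟩
      · exact lt_of_le_of_lt (Nat.find_min' hex hbk) (Nat.lt_succ_of_le hk)
      · intro j hj
        exact le_of_not_gt (Nat.find_min hex hj)
    · rintro ⟨k, hk, _, hbk⟩
      exact ⟨k, Nat.lt_succ_iff.mp hk, hbk⟩
  have hTsub : ∀ k ∈ Finset.range (n+1), T k ⊆ Mev := by
    intro k hk x hx
    exact ⟨k, Nat.lt_succ_iff.mp (Finset.mem_range.mp hk), hx.2⟩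
  -- pairwise disjointness
  have hTdisj : (↑(Finset.range (n+1)) : Set ℕ).PairwiseDisjoint T := by
    have key : ∀ k l : ℕ, k < l → Disjoint (T k) (T l) := by
      intro k l h
      refine Set.disjoint_left.mpr fun x hxk hxl => ?_
      exact absurd (hxl.1 k h) (not_le.mpr hxk.2)
    intro k _ l _ hkl
    rcases lt_or_gt_of_ne hkl with h | h
    · exact key _ _ h
    · exact (key _ _ h).symm
  -- the reflection identity
  have hrefl : ∀ k, P (T k ∩ C1) = P (T k ∩ {x | 2 * psum x k - psum x n < b}) := by
    intro k
    have hmap := map_reflMap_pi (n := n) k ρ hsym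
    have hAmeas : MeasurableSet (T k ∩ C1) := (hTmeas k).inter hC1meas
    have hpre : reflMap n k ⁻¹' (T k ∩ C1)
        = T k ∩ {x | 2 * psum x k - psum x n < b} := by
      ext x
      simp only [Set.mem_preimage, Set.mem_inter_iff, Set.mem_setOf_eq, hT, hC1]
      have h1 : ∀ j, j ≤ k → psum (reflMap n k x) j = psum x j :=
        fun j hj => psum_reflMap_of_le x hj
      rw [psum_reflMap_top, h1 k le_rfl]
      constructor
      · rintro ⟨⟨ha, hb'⟩, hc⟩
        exact ⟨⟨fun j hj => by rw [← h1 j hj.le]; exact ha j hj, hb'⟩, hc⟩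
      · rintro ⟨⟨ha, hb'⟩, hc⟩
        exact ⟨⟨fun j hj => by rw [h1 j hj.le]; exact ha j hj, hb'⟩, hc⟩
    rw [hP]
    conv_lhs => rw [← hmap]
    rw [Measure.map_apply (measurable_reflMap n k) hAmeas, hpre]
  -- per-k upper estimate
  have hupper_k : ∀ k, P (T k) ≤ 2 * P (T k ∩ C2) := by
    intro k
    have hsplit : P (T k ∩ C1) + P (T k \ C1) = P (T k) := measure_inter_add_diff _ hC1meas
    have hdiff : T k \ C1 = T k ∩ C2 := by
      ext x
      simp only [Set.mem_diff, Set.mem_inter_iff, Set.mem_setOf_eq, hC1, hC2, not_lt]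
    have hsub2 : T k ∩ {x | 2 * psum x k - psum x n < b} ⊆ T k ∩ C2 := by
      rintro x ⟨hxT, hx2⟩
      refine ⟨hxT, ?_⟩
      have hbk : b < psum x k := hxT.2
      simp only [Set.mem_setOf_eq, hC2]
      simp only [Set.mem_setOf_eq] at hx2
      linarith
    calc P (T k) = P (T k ∩ C1) + P (T k ∩ C2) := by rw [← hsplit, hdiff]
      _ ≤ P (T k ∩ C2) + P (T k ∩ C2) :=
          add_le_add_left ((hrefl k).trans_le (measure_mono hsub2)) _
      _ = 2 * P (T k ∩ C2) := (two_mul _).symm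
  -- per-k lower estimate
  have hlower_k : ∀ k ∈ Finset.range (n+1),
      P (T k ∩ C3) ≤ P (T k ∩ C1) + P (T k ∩ D) := by
    intro k hk
    have hsub : T k ∩ C3 ⊆ (T k ∩ {x | 2 * psum x k - psum x n < b}) ∪ (T k ∩ D) := by
      rintro x ⟨hxT, hx3⟩
      simp only [Set.mem_setOf_eq, hC3] at hx3
      by_cases hc : psum x k < b + δ
      · left
        exact ⟨hxT, by simp only [Set.mem_setOf_eq]; linarith⟩
      · right
        refine ⟨hxT, ?_⟩
        push_neg at hc
        have hk0 : k ≠ 0 := by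
          rintro rfl
          have h0 := hxT.2
          rw [psum_zero] at h0
          linarith
        obtain ⟨j, rfl⟩ : ∃ j, k = j + 1 := ⟨k - 1, by omega⟩
        have hjn : j < n := by
          have := Finset.mem_range.mp hk
          omega
        have hpj : psum x j ≤ b := hxT.1 j (Nat.lt_succ_self j)
        have := psum_succ x hjn
        exact ⟨⟨j, hjn⟩, by linarith⟩
    calc P (T k ∩ C3) ≤ P ((T k ∩ {x | 2 * psum x k - psum x n < b}) ∪ (T k ∩ D)) :=
        measure_mono hsub
      _ ≤ P (T k ∩ {x | 2 * psum x k - psum x n < b}) + P (T k ∩ D) := measure_union_le _ _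
      _ = P (T k ∩ C1) + P (T k ∩ D) := by rw [← hrefl k]
  -- bound on D
  have hDbound : P D ≤ n * ρ {y | δ ≤ y} := by
    have hDeq : D = ⋃ i : Fin n, (fun x : Fin n → ℝ => x i) ⁻¹' {y | δ ≤ y} := by
      ext x; simp [hD]
    have hslice : ∀ i : Fin n, P ((fun x : Fin n → ℝ => x i) ⁻¹' {y | δ ≤ y})
        = ρ {y | δ ≤ y} := by
      intro i
      have hset : (fun x : Fin n → ℝ => x i) ⁻¹' {y | δ ≤ y}
          = Set.pi Set.univ (fun j => if j = i then {y | δ ≤ y} else Set.univ) := by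
        ext x
        simp only [Set.mem_preimage, Set.mem_pi, Set.mem_univ, true_implies, Set.mem_setOf_eq]
        constructor
        · intro h j
          by_cases hji : j = i <;> simp [hji, h]
        · intro h
          have := h i
          simpa using this
      rw [hset, hP, Measure.pi_pi]
      rw [Finset.prod_eq_single i (fun j _ hji => by simp [hji]) (by simp)]
      simp
    calc P D ≤ ∑ i : Fin n, P ((fun x : Fin n → ℝ => x i) ⁻¹' {y | δ ≤ y}) := by
          rw [hDeq]
          exact measure_iUnion_fintype_le _ _
      _ = n * ρ {y | δ ≤ y} := by
          simp only [hslice, Finset.sum_const, Finset.card_univ, Fintype.card_fin, nsmul_eq_mul]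
  -- partition identity
  have hpart : P Mev = ∑ k ∈ Finset.range (n+1), P (T k) := by
    rw [hMev]
    exact measure_biUnion_finset hTdisj fun k _ => hTmeas k
  have hDmeas : MeasurableSet D := by
    have : D = ⋃ i : Fin n, (fun x : Fin n → ℝ => x i) ⁻¹' {y | δ ≤ y} := by
      ext x; simp [hD]
    rw [this]
    exact MeasurableSet.iUnion fun i =>
      (measurableSet_le measurable_const measurable_id).preimage (measurable_pi_apply i)
  -- sums over intersections
  have hsum_inter : ∀ (C : Set (Fin n → ℝ)), MeasurableSet C →
      ∑ k ∈ Finset.range (n+1), P (T k ∩ C) = P (Mev ∩ C) := by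
    intro C hC
    have hU : Mev ∩ C = ⋃ k ∈ Finset.range (n+1), (T k ∩ C) := by
      rw [hMev, Set.iUnion₂_inter]
    rw [hU]
    exact (measure_biUnion_finset (hTdisj.mono fun k => Set.inter_subset_left)
      fun k _ => (hTmeas k).inter hC).symm
  constructor
  · calc P Mev = ∑ k ∈ Finset.range (n+1), P (T k) := hpart
      _ ≤ ∑ k ∈ Finset.range (n+1), 2 * P (T k ∩ C2) := Finset.sum_le_sum fun k _ => hupper_k k
      _ = 2 * ∑ k ∈ Finset.range (n+1), P (T k ∩ C2) := by rw [Finset.mul_sum]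
      _ = 2 * P (Mev ∩ C2) := by rw [hsum_inter C2 hC2meas]
      _ ≤ 2 * P C2 := by gcongr; exact Set.inter_subset_right
  · have hC3Mev : C3 ⊆ Mev := by
      intro x hx
      simp only [Set.mem_setOf_eq, hC3] at hx
      exact ⟨n, le_rfl, by linarith⟩
    have h1 : P C3 ≤ P (Mev ∩ C1) + P D := by
      calc P C3 = P (Mev ∩ C3) := by rw [Set.inter_eq_self_of_subset_right hC3Mev]
        _ = ∑ k ∈ Finset.range (n+1), P (T k ∩ C3) := (hsum_inter C3 hC3meas).symm
        _ ≤ ∑ k ∈ Finset.range (n+1), (P (T k ∩ C1) + P (T k ∩ D)) :=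
            Finset.sum_le_sum hlower_k
        _ = ∑ k ∈ Finset.range (n+1), P (T k ∩ C1)
            + ∑ k ∈ Finset.range (n+1), P (T k ∩ D) := Finset.sum_add_distrib
        _ ≤ P (Mev ∩ C1) + P D := by
            rw [hsum_inter C1 hC1meas, hsum_inter D hDmeas]
            gcongr
            exact Set.inter_subset_right
    have h2 : P C3 ≤ P (Mev ∩ C2) := by
      refine measure_mono fun x hx => ?_
      refine ⟨hC3Mev hx, ?_⟩
      simp only [Set.mem_setOf_eq, hC3] at hx
      simp only [Set.mem_setOf_eq, hC2]
      linarith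
    have hMevsplit : P (Mev ∩ C1) + P (Mev ∩ C2) = P Mev := by
      have hd : Mev ∩ C2 = Mev \ C1 := by
        ext x; simp [hC1, hC2, not_lt, Set.mem_diff]
      rw [hd]
      exact measure_inter_add_diff _ hC1meas
    calc 2 * P C3 = P C3 + P C3 := two_mul _
      _ ≤ (P (Mev ∩ C1) + P D) + P (Mev ∩ C2) := add_le_add h1 h2
      _ = (P (Mev ∩ C1) + P (Mev ∩ C2)) + P D := by ring
      _ = P Mev + P D := by rw [hMevsplit]
      _ ≤ P Mev + n * ρ {y | δ ≤ y} := by gcongr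


/-- Joint law of independent random variables is the product measure. -/
lemma joint_law {Ω : Type*} [MeasurableSpace Ω] (μ : Measure Ω) [IsProbabilityMeasure μ]
    {n : ℕ} (X : Fin n → Ω → ℝ) (hX : ∀ i, Measurable (X i))
    (h : iIndepFun X μ) :
    Measure.map (fun ω i => X i ω) μ = Measure.pi (fun i => Measure.map (X i) μ) := by
  haveI : ∀ i, IsProbabilityMeasure (Measure.map (X i) μ) :=
    fun i => Measure.isProbabilityMeasure_map (hX i).aemeasurable
  refine (Measure.pi_eq fun s hs => ?_).symm
  rw [Measure.map_apply (measurable_pi_lambda _ hX) (MeasurableSet.univ_pi hs)]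
  have hset : (fun ω i => X i ω) ⁻¹' Set.pi Set.univ s = ⋂ i ∈ Finset.univ, X i ⁻¹' s i := by
    ext ω; simp [Set.mem_pi]
  rw [hset, h.measure_inter_preimage_eq_mul Finset.univ (fun i _ => hs i)]
  exact Finset.prod_congr rfl fun i _ => (Measure.map_apply (hX i) (hs i)).symm


lemma gaussian_map_neg (v : ℝ≥0) :
    Measure.map (fun x => -x) (gaussianReal 0 v) = gaussianReal 0 v := by
  have h := gaussianReal_map_const_mul (μ := 0) (v := v) (-1)
  have h2 : (NNReal.mk ((-1 : ℝ)^2) (sq_nonneg _)) = 1 := by ext; norm_num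
  rw [h2, one_mul, mul_zero] at h
  have : ((-1 : ℝ) * ·) = (fun x : ℝ => -x) := by ext x; ring
  rwa [this] at h


lemma pdf_mul_exp (v : ℝ≥0) (hv : v ≠ 0) (s x : ℝ) :
    gaussianPDFReal 0 v x * rexp (s * x)
      = rexp (s^2 * v / 2) * gaussianPDFReal (s * v) v x := by
  have hv' : (0:ℝ) < v := by
    have := v.coe_nonneg
    rcases this.lt_or_eq with h | h
    · exact h
    · exact absurd (by exact_mod_cast h.symm) hv
  simp only [gaussianPDFReal, sub_zero]
  rw [mul_assoc, ← Real.exp_add, mul_left_comm, ← Real.exp_add]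
  congr 1
  field_simp
  ring

lemma lintegral_exp_gaussian (v : ℝ≥0) (hv : v ≠ 0) (s : ℝ) :
    ∫⁻ x, ENNReal.ofReal (rexp (s * x)) ∂(gaussianReal 0 v)
      = ENNReal.ofReal (rexp (s^2 * v / 2)) := by
  rw [gaussianReal_of_var_ne_zero _ hv,
    lintegral_withDensity_eq_lintegral_mul _ (measurable_gaussianPDF _ _)
      (by fun_prop)]
  have hpt : ∀ x, (gaussianPDF 0 v * fun x => ENNReal.ofReal (rexp (s*x))) x
      = ENNReal.ofReal (rexp (s^2*v/2)) * ENNReal.ofReal (gaussianPDFReal (s*v) v x) := by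
    intro x
    simp only [Pi.mul_apply, gaussianPDF]
    rw [← ENNReal.ofReal_mul (gaussianPDFReal_nonneg _ _ _), pdf_mul_exp v hv s x,
      ENNReal.ofReal_mul (Real.exp_nonneg _)]
  simp only [hpt]
  rw [lintegral_const_mul _ ((measurable_gaussianPDFReal _ _).ennreal_ofReal), lintegral_gaussianPDFReal_eq_one _ hv, mul_one]

lemma gaussian_tail (v : ℝ≥0) (hv : v ≠ 0) {δ : ℝ} (hδ : 0 < δ) :
    gaussianReal 0 v {x | δ ≤ x} ≤ ENNReal.ofReal (rexp (-δ^2 / (2*v))) := by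
  have hv' : (0:ℝ) < v := by
    have := v.coe_nonneg
    rcases this.lt_or_eq with h | h
    · exact h
    · exact absurd (by exact_mod_cast h.symm) hv
  set s : ℝ := δ / v with hs_def
  have hs : 0 < s := div_pos hδ hv'
  have key : ENNReal.ofReal (rexp (s * δ)) * gaussianReal 0 v {x | δ ≤ x}
      ≤ ENNReal.ofReal (rexp (s^2 * v / 2)) := by
    calc ENNReal.ofReal (rexp (s * δ)) * gaussianReal 0 v {x | δ ≤ x}
        ≤ ENNReal.ofReal (rexp (s * δ)) *
          gaussianReal 0 v {x | ENNReal.ofReal (rexp (s * δ)) ≤ ENNReal.ofReal (rexp (s * x))} := by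
          gcongr
          intro hx
          have hx' : δ ≤ x := hx
          exact ENNReal.ofReal_le_ofReal (Real.exp_le_exp.2 (by nlinarith))
      _ ≤ ∫⁻ x, ENNReal.ofReal (rexp (s * x)) ∂(gaussianReal 0 v) :=
          mul_meas_ge_le_lintegral₀ (by fun_prop) _
      _ = ENNReal.ofReal (rexp (s^2 * v / 2)) := lintegral_exp_gaussian v hv s
  have hne : ENNReal.ofReal (rexp (s * δ)) ≠ 0 := by
    simp [Real.exp_pos]
  have hnt : ENNReal.ofReal (rexp (s * δ)) ≠ ⊤ := ENNReal.ofReal_ne_top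
  have key' : gaussianReal 0 v {x | δ ≤ x} * ENNReal.ofReal (rexp (s * δ))
      ≤ ENNReal.ofReal (rexp (s^2 * v / 2)) := by rw [mul_comm]; exact key
  have := (ENNReal.le_div_iff_mul_le (Or.inl hne) (Or.inl hnt)).2 key'
  refine this.trans (le_of_eq ?_)
  rw [← ENNReal.ofReal_div_of_pos (Real.exp_pos _), ← Real.exp_sub]
  congr 1
  have hveq : s * v = δ := by rw [hs_def, div_mul_cancel₀ _ hv'.ne']
  congr 1
  rw [hs_def]
  field_simp
  ring


variable {Ω : Type*} [MeasurableSpace Ω] {μ : Measure Ω} {B : ℝ → Ω → ℝ}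

lemma bm_grid_bounds [IsProbabilityMeasure μ] (hB : IsBrownianMotion μ B)
    {t : ℝ} (ht : 0 < t) {n : ℕ} (hn : 0 < n) {b δ : ℝ} (hb : 0 < b) (hδ : 0 < δ) :
    μ {ω | ∃ k, k ≤ n ∧ b < B ((k : ℝ) * t / n) ω} ≤ 2 * μ {ω | b ≤ B t ω}
    ∧ 2 * μ {ω | b + 2*δ ≤ B t ω}
        ≤ μ {ω | ∃ k, k ≤ n ∧ b < B ((k : ℝ) * t / n) ω}
          + n * ENNReal.ofReal (rexp (-δ^2 / (2 * (t / n)))) := by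
  classical
  set g : ℕ → ℝ := fun k => (k : ℝ) * t / n with hg
  have hn' : (0 : ℝ) < n := by exact_mod_cast hn
  have htn : 0 < t / n := div_pos ht hn'
  set v : ℝ≥0 := Real.toNNReal (t / n) with hv
  have hvne : v ≠ 0 := by
    simp only [hv, ne_eq, Real.toNNReal_eq_zero, not_le]
    exact htn
  have hvco : (v : ℝ) = t / n := Real.coe_toNNReal _ htn.le
  set X : Fin n → Ω → ℝ := fun i => fun ω => B (g ((i : ℕ) + 1)) ω - B (g (i : ℕ)) ω with hX
  have hXmeas : ∀ i, Measurable (X i) := fun i =>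
    (hB.measurable _).sub (hB.measurable _)
  have hgmono : Monotone g := by
    intro j k hjk
    simp only [hg]
    have hc : (j : ℝ) ≤ (k : ℝ) := by exact_mod_cast hjk
    gcongr
  have hgpos : ∀ k, 0 ≤ g k := fun k => by positivity
  have hmarg : ∀ i : Fin n, Measure.map (X i) μ = gaussianReal 0 v := by
    intro i
    have h1 := hB.increment (g (i : ℕ)) (g ((i : ℕ)+1)) (hgpos _) (hgmono (Nat.le_succ _))
    have h2 : g ((i : ℕ)+1) - g (i : ℕ) = t / n := by
      simp only [hg]; push_cast; ring
    rw [h2] at h1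
    exact h1
  have hindep := hB.indep n g hgmono hgpos
  have hjoint : Measure.map (fun ω (i : Fin n) => X i ω) μ
      = Measure.pi (fun _ : Fin n => gaussianReal 0 v) := by
    rw [joint_law μ X hXmeas hindep]
    exact congrArg Measure.pi (funext hmarg)
  have tele : ∀ ω k, k ≤ n → psum (fun i => X i ω) k = B (g k) ω := by
    intro ω k
    induction k with
    | zero =>
      intro _
      rw [psum_zero]
      have h0 : g 0 = 0 := by simp [hg]
      rw [h0, hB.init ω]
    | succ k ih =>
      intro hk
      have hkn : k < n := hk
      rw [psum_succ _ hkn, ih hkn.le]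
      have hXk : X ⟨k, hkn⟩ ω = B (g (k+1)) ω - B (g k) ω := rfl
      rw [hXk]
      ring
  set F : Ω → (Fin n → ℝ) := fun ω i => X i ω with hF
  have hFmeas : Measurable F := measurable_pi_lambda _ hXmeas
  have hev1 : {ω | ∃ k, k ≤ n ∧ b < B (g k) ω}
      = F ⁻¹' {x | ∃ k, k ≤ n ∧ b < psum x k} := by
    ext ω
    simp only [Set.mem_setOf_eq, Set.mem_preimage]
    constructor
    · rintro ⟨k, hk, h⟩
      exact ⟨k, hk, by rw [tele ω k hk]; exact h⟩
    · rintro ⟨k, hk, h⟩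
      rw [tele ω k hk] at h
      exact ⟨k, hk, h⟩
  have hgn : g n = t := by
    simp only [hg]
    field_simp
  have hev2 : ∀ c : ℝ, {ω | c ≤ B t ω} = F ⁻¹' {x | c ≤ psum x n} := by
    intro c
    ext ω
    simp only [Set.mem_setOf_eq, Set.mem_preimage]
    rw [tele ω n le_rfl, hgn]
  have hMmeas : MeasurableSet {x : Fin n → ℝ | ∃ k, k ≤ n ∧ b < psum x k} := by
    have h : {x : Fin n → ℝ | ∃ k, k ≤ n ∧ b < psum x k}
        = ⋃ k, ⋃ _ : k ≤ n, {x | b < psum x k} := by ext x; simp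
    rw [h]
    exact MeasurableSet.iUnion fun k => MeasurableSet.iUnion fun _ =>
      measurableSet_lt measurable_const (measurable_psum k)
  have hNmeas : ∀ c : ℝ, MeasurableSet {x : Fin n → ℝ | c ≤ psum x n} :=
    fun c => measurableSet_le measurable_const (measurable_psum n)
  have htrans : ∀ A : Set (Fin n → ℝ), MeasurableSet A →
      μ (F ⁻¹' A) = (Measure.pi fun _ : Fin n => gaussianReal 0 v) A := by
    intro A hA
    rw [← hjoint, Measure.map_apply hFmeas hA]
  have hdr := discrete_reflection hn (gaussianReal 0 v) (gaussian_map_neg v) hb hδ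
  constructor
  · rw [hev1, hev2 b, htrans _ hMmeas, htrans _ (hNmeas b)]
    exact hdr.1
  · rw [hev1, hev2 (b + 2*δ), htrans _ hMmeas, htrans _ (hNmeas _)]
    refine hdr.2.trans ?_
    gcongr
    exact (gaussian_tail v hvne hδ).trans (by rw [hvco])


section Main

variable [IsProbabilityMeasure μ] (hB : IsBrownianMotion μ B) {t : ℝ} (ht : 0 < t)

/-- The error term tends to zero. -/
lemma error_tendsto {δ : ℝ} (hδ : 0 < δ) (ht : 0 < t) :
    Tendsto (fun m : ℕ => ((2^m : ℕ) : ℝ≥0∞) *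
      ENNReal.ofReal (rexp (-δ^2 / (2 * (t / (2^m : ℕ)))))) atTop (𝓝 0) := by
  have hc : 0 < δ^2 / (2*t) := by positivity
  set c : ℝ := δ^2 / (2*t) with hcdef
  -- real-valued limit
  have hreal : Tendsto (fun x : ℝ => x * rexp (-c * x)) atTop (𝓝 0) := by
    have h1 : Tendsto (fun y : ℝ => y ^ 1 * rexp (-y)) atTop (𝓝 0) :=
      tendsto_pow_mul_exp_neg_atTop_nhds_zero 1
    have h2 : Tendsto (fun x : ℝ => c * x) atTop atTop :=
      Tendsto.const_mul_atTop hc tendsto_id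
    have h3 := (h1.comp h2).const_mul (1/c)
    rw [mul_zero] at h3
    refine h3.congr fun x => ?_
    simp only [Function.comp_apply, pow_one]
    field_simp
  have hcomp : Tendsto (fun m : ℕ => ((2:ℝ)^m) * rexp (-c * 2^m)) atTop (𝓝 0) :=
    hreal.comp (tendsto_pow_atTop_atTop_of_one_lt (by norm_num : (1:ℝ) < 2))
  have hENN := ENNReal.tendsto_ofReal hcomp
  rw [ENNReal.ofReal_zero] at hENN
  refine hENN.congr fun m => ?_
  have h2m : (0:ℝ) < (2:ℝ)^m := by positivity
  rw [ENNReal.ofReal_mul h2m.le]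
  congr 1
  · rw [← ENNReal.ofReal_natCast]
    congr 1
    push_cast
    ring
  · congr 1
    rw [hcdef]
    have : ((2^m : ℕ) : ℝ) = (2:ℝ)^m := by push_cast; ring
    rw [this]
    field_simp

lemma atom_zero (hB : IsBrownianMotion μ B) (ht : 0 < t) (b : ℝ) :
    μ {ω | B t ω = b} = 0 := by
  have h1 := hB.increment 0 t le_rfl ht.le
  have h2 : (fun ω => B t ω - B 0 ω) = B t := by
    funext ω; rw [hB.init ω, sub_zero]
  rw [h2, sub_zero] at h1
  have hv : Real.toNNReal t ≠ 0 := by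
    simp only [ne_eq, Real.toNNReal_eq_zero, not_le]
    exact ht
  have h3 : {ω | B t ω = b} = B t ⁻¹' {b} := rfl
  rw [h3, ← Measure.map_apply (hB.measurable t) (measurableSet_singleton b), h1]
  exact gaussianReal_absolutelyContinuous 0 hv (measure_singleton b)

lemma lt_le_eq (hB : IsBrownianMotion μ B) (ht : 0 < t) (b : ℝ) :
    μ {ω | b < B t ω} = μ {ω | b ≤ B t ω} := by
  have hsub : {ω | b < B t ω} ⊆ {ω | b ≤ B t ω} := by
    intro ω h
    simp only [Set.mem_setOf_eq] at h ⊢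
    exact le_of_lt h
  refine le_antisymm (measure_mono hsub) ?_
  calc μ {ω | b ≤ B t ω} ≤ μ ({ω | b < B t ω} ∪ {ω | B t ω = b}) := by
        refine measure_mono fun ω h => ?_
        simp only [Set.mem_setOf_eq] at h
        rcases lt_or_eq_of_le h with h' | h'
        · exact Or.inl h'
        · exact Or.inr h'.symm
    _ ≤ μ {ω | b < B t ω} + μ {ω | B t ω = b} := measure_union_le _ _
    _ = μ {ω | b < B t ω} := by rw [atom_zero hB ht b, add_zero]

lemma grid_meas (hB : IsBrownianMotion μ B) (b : ℝ) (n : ℕ) :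
    MeasurableSet {ω | ∃ k, k ≤ n ∧ b < B ((k : ℝ) * t / (n : ℕ)) ω} := by
  have h : {ω | ∃ k, k ≤ n ∧ b < B ((k : ℝ) * t / (n : ℕ)) ω}
      = ⋃ k, ⋃ _ : k ≤ n, {ω | b < B ((k : ℝ) * t / (n : ℕ)) ω} := by
    ext ω; simp
  rw [h]
  exact MeasurableSet.iUnion fun k => MeasurableSet.iUnion fun _ =>
    measurableSet_lt measurable_const (hB.measurable _)

lemma dyadic_mono (b : ℝ) :
    Monotone (fun m : ℕ =>
      {ω | ∃ k : ℕ, k ≤ 2^m ∧ b < B ((k : ℝ) * t / ((2^m : ℕ) : ℝ)) ω}) := by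
  refine monotone_nat_of_le_succ fun m ω hω => ?_
  obtain ⟨k, hk, h⟩ := hω
  refine ⟨2*k, by omega, ?_⟩
  have harg : ((2*k : ℕ) : ℝ) * t / ((2^(m+1) : ℕ) : ℝ)
      = (k : ℝ) * t / ((2^m : ℕ) : ℝ) := by
    push_cast
    rw [pow_succ]
    have h2m : ((2:ℝ)^m) ≠ 0 := by positivity
    field_simp
  rw [harg]
  exact h

lemma dyadic_union (hB : IsBrownianMotion μ B) (ht : 0 < t) {b : ℝ} (hb : 0 < b) :
    {ω | b < ⨆ s : Set.Icc (0:ℝ) t, B s ω}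
      = ⋃ m : ℕ, {ω | ∃ k : ℕ, k ≤ 2^m ∧ b < B ((k : ℝ) * t / ((2^m : ℕ) : ℝ)) ω} := by
  haveI : Nonempty (Set.Icc (0:ℝ) t) := ⟨⟨0, Set.left_mem_Icc.mpr ht.le⟩⟩
  ext ω
  simp only [Set.mem_setOf_eq, Set.mem_iUnion]
  have hbdd : BddAbove (Set.range fun s : Set.Icc (0:ℝ) t => B s ω) := by
    have hsub : (Set.range fun s : Set.Icc (0:ℝ) t => B s ω)
        ⊆ (fun r => B r ω) '' Set.Icc 0 t := by
      rintro y ⟨s, rfl⟩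
      exact ⟨s, s.2, rfl⟩
    exact BddAbove.mono hsub (isCompact_Icc.image (hB.cont ω)).bddAbove
  constructor
  · intro h
    obtain ⟨s₀, hs₀mem, hs₀max⟩ := isCompact_Icc.exists_isMaxOn (Set.nonempty_Icc.mpr ht.le)
      (hB.cont ω).continuousOn
    have hM_le : (⨆ s : Set.Icc (0:ℝ) t, B s ω) ≤ B s₀ ω :=
      ciSup_le fun s => (isMaxOn_iff.mp hs₀max) s s.2
    have hbs₀ : b < B s₀ ω := lt_of_lt_of_le h hM_le
    have hopen : IsOpen {s : ℝ | b < B s ω} := isOpen_lt continuous_const (hB.cont ω)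
    obtain ⟨ε, hε, hball⟩ := Metric.isOpen_iff.mp hopen s₀ hbs₀
    obtain ⟨m, hm⟩ := pow_unbounded_of_one_lt (t/ε) (by norm_num : (1:ℝ) < 2)
    have h2m : (0:ℝ) < (2:ℝ)^m := by positivity
    have htm : t / 2^m < ε := by
      rw [div_lt_iff₀ h2m]
      rw [div_lt_iff₀ hε] at hm
      linarith
    have hs₀0 : 0 ≤ s₀ := hs₀mem.1
    have hs₀t : s₀ ≤ t := hs₀mem.2
    set z : ℝ := s₀ * 2^m / t with hz
    have hz0 : 0 ≤ z := by positivity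
    set k : ℕ := ⌊z⌋₊ with hk
    have hcast : ((2^m : ℕ) : ℝ) = (2:ℝ)^m := by push_cast; ring
    have hk2m : k ≤ 2^m := by
      have hzle : z ≤ ((2^m : ℕ) : ℝ) := by
        rw [hcast, hz, div_le_iff₀ ht]
        calc s₀ * 2^m ≤ t * 2^m := by gcongr
          _ = 2^m * t := mul_comm _ _
      calc k ≤ ⌊((2^m : ℕ) : ℝ)⌋₊ := Nat.floor_le_floor hzle
        _ = 2^m := Nat.floor_natCast _
    set s₁ : ℝ := (k : ℝ) * t / ((2^m : ℕ) : ℝ) with hs₁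
    have hles : s₁ ≤ s₀ := by
      rw [hs₁, hcast, div_le_iff₀ h2m]
      have hfl := Nat.floor_le hz0
      rw [← hk] at hfl
      rw [hz] at hfl
      calc (k:ℝ) * t ≤ (s₀ * 2^m / t) * t := by gcongr
        _ = s₀ * 2^m := by field_simp
    have hzlt : z < (k:ℝ) + 1 := Nat.lt_floor_add_one z
    have hs₀lt : s₀ < ((k:ℝ)+1) * t / 2^m := by
      rw [hz, div_lt_iff₀ ht] at hzlt
      rw [lt_div_iff₀ h2m]
      linarith
    have hgt : s₀ - s₁ < ε := by
      have hdiff : ((k:ℝ)+1) * t / 2^m - (k:ℝ) * t / 2^m = t / 2^m := by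
        field_simp
        ring
      have hs₁' : s₁ = (k:ℝ) * t / 2^m := by rw [hs₁, hcast]
      rw [hs₁']
      linarith
    have hmem : s₁ ∈ Metric.ball s₀ ε := by
      rw [Metric.mem_ball, Real.dist_eq, abs_sub_lt_iff]
      have hε' : 0 < ε := hε
      constructor <;> linarith
    exact ⟨m, k, hk2m, hball hmem⟩
  · rintro ⟨m, k, hk, h⟩
    have h2m : (0:ℝ) < (2:ℝ)^m := by positivity
    have hcast : ((2^m : ℕ) : ℝ) = (2:ℝ)^m := by push_cast; ring
    have hmem : (k : ℝ) * t / ((2^m : ℕ) : ℝ) ∈ Set.Icc (0:ℝ) t := by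
      constructor
      · rw [hcast]; positivity
      · rw [hcast, div_le_iff₀ h2m]
        have hkr : (k : ℝ) ≤ (2:ℝ)^m := by
          rw [show ((2:ℝ)^m) = ((2^m : ℕ) : ℝ) from hcast.symm]
          exact_mod_cast hk
        calc (k:ℝ) * t ≤ (2:ℝ)^m * t := by gcongr
          _ = t * 2^m := mul_comm _ _
    exact lt_of_lt_of_le h (le_ciSup hbdd ⟨_, hmem⟩)

lemma level_eq (hB : IsBrownianMotion μ B) (ht : 0 < t) {b : ℝ} (hb : 0 < b) :
    μ {ω | b < ⨆ s : Set.Icc (0:ℝ) t, B s ω} = 2 * μ {ω | b ≤ B t ω} := by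
  set A : ℕ → Set Ω := fun m =>
    {ω | ∃ k : ℕ, k ≤ 2^m ∧ b < B ((k : ℝ) * t / ((2^m : ℕ) : ℝ)) ω} with hA
  have hun : {ω | b < ⨆ s : Set.Icc (0:ℝ) t, B s ω} = ⋃ m, A m := dyadic_union hB ht hb
  have htend : Tendsto (fun m => μ (A m)) atTop
      (𝓝 (μ {ω | b < ⨆ s : Set.Icc (0:ℝ) t, B s ω})) := by
    rw [hun]
    exact tendsto_measure_iUnion_atTop (dyadic_mono b)
  have h1 : μ {ω | b < ⨆ s : Set.Icc (0:ℝ) t, B s ω} ≤ 2 * μ {ω | b ≤ B t ω} :=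
    le_of_tendsto' htend fun m =>
      (bm_grid_bounds hB ht (pow_pos two_pos m) hb one_pos).1
  have h2 : ∀ δ : ℝ, 0 < δ →
      2 * μ {ω | b + 2*δ ≤ B t ω} ≤ μ {ω | b < ⨆ s : Set.Icc (0:ℝ) t, B s ω} := by
    intro δ hδ
    have herr := error_tendsto (t := t) hδ ht
    have hstep : ∀ m : ℕ, 2 * μ {ω | b + 2*δ ≤ B t ω}
        ≤ μ {ω | b < ⨆ s : Set.Icc (0:ℝ) t, B s ω}
          + ((2^m : ℕ) : ℝ≥0∞) * ENNReal.ofReal (rexp (-δ^2 / (2 * (t / (2^m : ℕ))))) := by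
      intro m
      refine ((bm_grid_bounds hB ht (pow_pos two_pos m) hb hδ).2).trans ?_
      refine add_le_add_left ?_ _
      rw [hun]
      exact measure_mono (Set.subset_iUnion A m)
    have hlim : Tendsto (fun m : ℕ => μ {ω | b < ⨆ s : Set.Icc (0:ℝ) t, B s ω}
        + ((2^m : ℕ) : ℝ≥0∞) * ENNReal.ofReal (rexp (-δ^2 / (2 * (t / (2^m : ℕ))))))
        atTop (𝓝 (μ {ω | b < ⨆ s : Set.Icc (0:ℝ) t, B s ω})) := by
      have hconst : Tendsto (fun _ : ℕ => μ {ω | b < ⨆ s : Set.Icc (0:ℝ) t, B s ω}) atTop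
          (𝓝 (μ {ω | b < ⨆ s : Set.Icc (0:ℝ) t, B s ω})) := tendsto_const_nhds
      have := hconst.add herr
      rwa [add_zero] at this
    exact ge_of_tendsto' hlim hstep
  have h3 : 2 * μ {ω | b < B t ω} ≤ μ {ω | b < ⨆ s : Set.Icc (0:ℝ) t, B s ω} := by
    set S : ℕ → Set Ω := fun j => {ω | b + 2*(1/((j:ℝ)+1)) ≤ B t ω} with hS
    have hSmono : Monotone S := by
      intro j j' hjj ω h
      simp only [hS, Set.mem_setOf_eq] at h ⊢
      have hj1 : (0:ℝ) < (j:ℝ)+1 := by positivity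
      have hjc : ((j:ℝ)+1) ≤ ((j':ℝ)+1) := by
        have : (j:ℝ) ≤ (j':ℝ) := by exact_mod_cast hjj
        linarith
      have := one_div_le_one_div_of_le hj1 hjc
      linarith
    have hSun : ⋃ j, S j = {ω | b < B t ω} := by
      ext ω
      simp only [hS, Set.mem_iUnion, Set.mem_setOf_eq]
      constructor
      · rintro ⟨j, h⟩
        have : (0:ℝ) < 2*(1/((j:ℝ)+1)) := by positivity
        linarith
      · intro h
        obtain ⟨j, hj⟩ := exists_nat_one_div_lt (show (0:ℝ) < (B t ω - b)/2 by linarith)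
        exact ⟨j, by linarith⟩
    have hT := tendsto_measure_iUnion_atTop (μ := μ) hSmono
    rw [hSun] at hT
    have hT2 := ENNReal.Tendsto.const_mul (a := 2) hT
      (Or.inr (by norm_num : (2:ℝ≥0∞) ≠ ⊤))
    refine le_of_tendsto' hT2 fun j => ?_
    exact h2 _ (by positivity)
  rw [lt_le_eq hB ht b] at h3
  exact le_antisymm h1 h3


theorem reflection_principle' (hB : IsBrownianMotion μ B)
    (a : ℝ) (ha : 0 < a) (ht : 0 < t) :
    μ {ω | a ≤ ⨆ s : Set.Icc (0 : ℝ) t, B s ω} = 2 * μ {ω | a ≤ B t ω} := by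
  set bs : ℕ → ℝ := fun j => a - a/((j:ℝ)+2) with hbs
  have hb_pos : ∀ j, 0 < bs j := by
    intro j
    have h1 : a/((j:ℝ)+2) < a := by
      apply div_lt_self ha
      have h0 : (0:ℝ) ≤ (j:ℝ) := Nat.cast_nonneg j
      linarith
    simp only [hbs]
    linarith
  have hb_lt : ∀ j, bs j < a := by
    intro j
    have h0 : (0:ℝ) < a/((j:ℝ)+2) := by positivity
    simp only [hbs]
    linarith
  have hb_mono : Monotone bs := by
    intro j j' hjj
    simp only [hbs]
    have hc : ((j:ℝ)+2) ≤ ((j':ℝ)+2) := by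
      have : (j:ℝ) ≤ (j':ℝ) := by exact_mod_cast hjj
      linarith
    have h2 : a/((j':ℝ)+2) ≤ a/((j:ℝ)+2) := by
      gcongr
    linarith
  have hb_tend : Tendsto bs atTop (𝓝 a) := by
    have hden : Tendsto (fun j : ℕ => (j:ℝ)+2) atTop atTop :=
      tendsto_atTop_add_const_right _ 2 tendsto_natCast_atTop_atTop
    have h0 : Tendsto (fun j : ℕ => a/((j:ℝ)+2)) atTop (𝓝 0) :=
      Tendsto.div_atTop tendsto_const_nhds hden
    have hconst : Tendsto (fun _ : ℕ => a) atTop (𝓝 a) := tendsto_const_nhds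
    have := hconst.sub h0
    rwa [sub_zero] at this
  set MS : ℕ → Set Ω := fun j => {ω | bs j < ⨆ s : Set.Icc (0:ℝ) t, B s ω} with hMS
  set NS : ℕ → Set Ω := fun j => {ω | bs j ≤ B t ω} with hNS
  have hMSanti : Antitone MS := by
    intro j j' h ω hω
    simp only [hMS, Set.mem_setOf_eq] at hω ⊢
    exact lt_of_le_of_lt (hb_mono h) hω
  have hNSanti : Antitone NS := by
    intro j j' h ω hω
    simp only [hNS, Set.mem_setOf_eq] at hω ⊢
    exact le_trans (hb_mono h) hω
  have hMSint : ⋂ j, MS j = {ω | a ≤ ⨆ s : Set.Icc (0:ℝ) t, B s ω} := by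
    ext ω
    simp only [Set.mem_iInter, hMS, Set.mem_setOf_eq]
    constructor
    · intro h
      exact le_of_tendsto' hb_tend fun j => (h j).le
    · intro h j
      exact lt_of_lt_of_le (hb_lt j) h
  have hNSint : ⋂ j, NS j = {ω | a ≤ B t ω} := by
    ext ω
    simp only [Set.mem_iInter, hNS, Set.mem_setOf_eq]
    constructor
    · intro h
      exact le_of_tendsto' hb_tend fun j => h j
    · intro h j
      exact le_trans (hb_lt j).le h
  have hMSmeas : ∀ j, MeasurableSet (MS j) := by
    intro j
    simp only [hMS]
    rw [dyadic_union hB ht (hb_pos j)]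
    exact MeasurableSet.iUnion fun m => grid_meas hB _ _
  have hNSmeas : ∀ j, MeasurableSet (NS j) :=
    fun j => measurableSet_le measurable_const (hB.measurable t)
  have hTM := tendsto_measure_iInter_atTop (μ := μ)
    (fun j => (hMSmeas j).nullMeasurableSet) hMSanti ⟨0, measure_ne_top μ _⟩
  have hTN := tendsto_measure_iInter_atTop (μ := μ)
    (fun j => (hNSmeas j).nullMeasurableSet) hNSanti ⟨0, measure_ne_top μ _⟩
  rw [hMSint] at hTM
  rw [hNSint] at hTN
  have hTN2 := ENNReal.Tendsto.const_mul (a := 2) hTN (Or.inr (by norm_num : (2:ℝ≥0∞) ≠ ⊤))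
  have heq : ∀ j, μ (MS j) = 2 * μ (NS j) := fun j => level_eq hB ht (hb_pos j)
  have hTM2 : Tendsto (fun j => μ (MS j)) atTop (𝓝 (2 * μ {ω | a ≤ B t ω})) :=
    hTN2.congr fun j => (heq j).symm
  exact tendsto_nhds_unique hTM hTM2

end Main


end RefAux

/-- Reflection principle: for standard Brownian motion `B` with `B(0) = 0`, `a > 0`, `t > 0`,
`P(max_{0 ≤ s ≤ t} B(s) ≥ a) = 2·P(B(t) ≥ a)`. -/
theorem reflection_principle {Ω : Type*} [MeasurableSpace Ω] (μ : Measure Ω)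
    [IsProbabilityMeasure μ] (B : ℝ → Ω → ℝ) (hB : IsBrownianMotion μ B)
    (a t : ℝ) (ha : 0 < a) (ht : 0 < t) :
    μ {ω | a ≤ ⨆ s : Set.Icc (0 : ℝ) t, B s ω} = 2 * μ {ω | a ≤ B t ω} := by
  exact RefAux.reflection_principle' hB a ha ht
end

section
/- Expected hitting time via local time: if T_a is the first hitting time of level a ∈ (0, x) by a Brownian bridge from 0 to x on [0, Δτ] with hitting density f_{T_a}(t) = a/(√(2π)·t^{3/2}·√(1 − t/Δτ))·exp(x²/(2Δτ) − (a−x)²/(2(Δτ−t)) − a²/(2t)), then E[T_a] = a·∫₀^{Δτ} ρ(t, a) dt, where ρ(t, a) = 1/(√(2π·t(Δτ−t)/Δτ))·exp(−(a − (t/Δτ)x)²·Δτ/(2t(Δτ−t))) is the density of the bridge position at level a at time t. -/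
open Real

theorem aux_pointwise (a x Δτ : ℝ) (ha : 0 < a) (hΔτ : 0 < Δτ)
    (t : ℝ) (ht : t ∈ Set.Ioo (0 : ℝ) Δτ) :
    t * (a / (Real.sqrt (2 * π) * t ^ ((3 : ℝ) / 2) * Real.sqrt (1 - t / Δτ)) *
      Real.exp (x ^ 2 / (2 * Δτ) - (a - x) ^ 2 / (2 * (Δτ - t)) - a ^ 2 / (2 * t)))
    = a * ((Real.sqrt (2 * π * (t * (Δτ - t) / Δτ)))⁻¹ *
      Real.exp (-(a - (t / Δτ) * x) ^ 2 * Δτ / (2 * (t * (Δτ - t))))) := by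
  obtain ⟨ht0, htΔ⟩ := ht
  have hΔt : 0 < Δτ - t := by linarith
  have hexp : x ^ 2 / (2 * Δτ) - (a - x) ^ 2 / (2 * (Δτ - t)) - a ^ 2 / (2 * t)
      = -(a - (t / Δτ) * x) ^ 2 * Δτ / (2 * (t * (Δτ - t))) := by
    field_simp
    ring
  rw [hexp]
  have h32 : t ^ ((3 : ℝ) / 2) = t * Real.sqrt t := by
    have : ((3 : ℝ) / 2) = 1 + 1 / 2 := by norm_num
    rw [this, Real.rpow_add ht0, Real.rpow_one, ← Real.sqrt_eq_rpow]
  have hsq : Real.sqrt (2 * π * (t * (Δτ - t) / Δτ))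
      = Real.sqrt (2 * π) * (Real.sqrt t * Real.sqrt (1 - t / Δτ)) := by
    rw [← Real.sqrt_mul ht0.le, ← Real.sqrt_mul (by positivity : (0:ℝ) ≤ 2 * π)]
    congr 1
    field_simp
  rw [h32, hsq]
  have hst : 0 < Real.sqrt t := Real.sqrt_pos.mpr ht0
  have hs2 : 0 < Real.sqrt (2 * π) := Real.sqrt_pos.mpr (by positivity)
  have hs1 : 0 < Real.sqrt (1 - t / Δτ) := Real.sqrt_pos.mpr (by
    rw [sub_pos, div_lt_one hΔτ]; exact htΔ)
  field_simp

/-- Expected hitting time via local time: with the Brownian-bridge hitting density `f_{T_a}`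
and bridge position density `ρ(t, a)`, one has the pointwise identity
`t·f_{T_a}(t) = a·ρ(t, a)` on `(0, Δτ)`, whence `E[T_a] = a·∫₀^{Δτ} ρ(t, a) dt`. -/
theorem expected_hitting_time_local_time (a x Δτ : ℝ) (ha : 0 < a) (hax : a < x)
    (hΔτ : 0 < Δτ) (fTa ρ : ℝ → ℝ)
    (hfTa : ∀ t, fTa t = a / (Real.sqrt (2 * π) * t ^ ((3 : ℝ) / 2)
        * Real.sqrt (1 - t / Δτ)) *
      Real.exp (x ^ 2 / (2 * Δτ) - (a - x) ^ 2 / (2 * (Δτ - t)) - a ^ 2 / (2 * t)))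
    (hρ : ∀ t, ρ t = (Real.sqrt (2 * π * (t * (Δτ - t) / Δτ)))⁻¹ *
      Real.exp (-(a - (t / Δτ) * x) ^ 2 * Δτ / (2 * (t * (Δτ - t))))) :
    (∀ t ∈ Set.Ioo (0 : ℝ) Δτ, t * fTa t = a * ρ t) ∧
      ∫ t in Set.Ioo (0 : ℝ) Δτ, t * fTa t = a * ∫ t in Set.Ioo (0 : ℝ) Δτ, ρ t := by
  have hpt : ∀ t ∈ Set.Ioo (0 : ℝ) Δτ, t * fTa t = a * ρ t := by
    intro t ht
    rw [hfTa, hρ]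
    exact aux_pointwise a x Δτ ha hΔτ t ht
  refine ⟨hpt, ?_⟩
  rw [← MeasureTheory.integral_const_mul]
  refine MeasureTheory.setIntegral_congr_fun measurableSet_Ioo ?_
  intro t ht
  exact hpt t ht
end
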